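/- Let f_0, f_1 ∈ ℂ[y,z] be homogeneous of weights k+1 and k+2 respectively (wt y = 1, wt z = 2), defined by f_0 = Σ_j (−1)^j ((k+1)!/((k+1−2j)!(j!)²)) y^{k+1−2j} z^j and f_1 = D·f_0 with D = ((k+2)y² − 2kz)∂/∂y + (3k+4)yz ∂/∂z, k ≥ 5. If a(y,z)f_0 + b(y,z)f_1 = 0 for a, b ∈ ℂ[y,z], then there exists h ∈ ℂ[y,z] with a = h·f_1 and b = −h·f_0. Equivalently, the sequence 0 → ℂ[y,z] → ℂ[y,z]² → (f_0, f_1) → 0, with maps h ↦ (h f_1, −h f_0) and (h_0, h_1) ↦ h_0 f_0 + h_1 f_1, is exact. -/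

import Mathlib

section

open MvPolynomial

/-- The operator `D = ((k+2)y² − 2kz) ∂/∂y + (3k+4) yz ∂/∂z` on `ℂ[y,z]`. -/
noncomputable def D2 (k : ℂ) : MvPolynomial (Fin 2) ℂ → MvPolynomial (Fin 2) ℂ :=
  fun p => (C (k + 2) * X 0 ^ 2 - C (2 * k) * X 1) * pderiv 0 p
    + C (3 * k + 4) * X 0 * X 1 * pderiv 1 p

/-- `f₀(y,z) = Σⱼ (−1)ʲ (k+1)!/((k+1−2j)!(j!)²) y^{k+1−2j} zʲ`. -/
noncomputable def f0 (k : ℕ) : MvPolynomial (Fin 2) ℂ :=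
  ∑ j ∈ Finset.range ((k + 1) / 2 + 1),
    C ((-1) ^ j * (Nat.factorial (k + 1) : ℂ) /
      (Nat.factorial (k + 1 - 2 * j) * (Nat.factorial j) ^ 2)) *
    X 0 ^ (k + 1 - 2 * j) * X 1 ^ j

end

noncomputable section

namespace Stmt12

open Polynomial Finset

/-- coefficients of the dehomogenized polynomial -/
def cc (k j : ℕ) : ℂ :=
  (-1) ^ j * (Nat.factorial (k + 1) : ℂ) /
    (Nat.factorial (k + 1 - 2 * j) * (Nat.factorial j) ^ 2)

def G (k : ℕ) : Polynomial ℂ :=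
  ∑ j ∈ Finset.range ((k + 1) / 2 + 1), C (cc k j) * X ^ j

lemma G_coeff (k m : ℕ) :
    (G k).coeff m = if m < (k + 1) / 2 + 1 then cc k m else 0 := by
  simp only [G, finset_sum_coeff, coeff_C_mul, coeff_X_pow, mul_ite, mul_one, mul_zero]
  rw [Finset.sum_ite_eq]
  simp [Finset.mem_range]

lemma fact_core (d m : ℕ) :
    ((m : ℂ) + 1) ^ 2 *
      ((-1) ^ (m + 1) * ((Nat.factorial (d + 2 * m + 2) : ℂ)) /
        ((Nat.factorial d : ℂ) * ((Nat.factorial (m + 1) : ℂ)) ^ 2))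
    = -(((d : ℂ) + 2)) * (((d : ℂ) + 1)) *
      ((-1) ^ m * ((Nat.factorial (d + 2 * m + 2) : ℂ)) /
        ((Nat.factorial (d + 2) : ℂ) * ((Nat.factorial m : ℂ)) ^ 2)) := by
  have h1 : Nat.factorial (d + 2) = (d + 2) * ((d + 1) * Nat.factorial d) := by
    rw [show d + 2 = (d+1)+1 by ring, Nat.factorial_succ, Nat.factorial_succ]
  have h2 : Nat.factorial (m + 1) = (m + 1) * Nat.factorial m := Nat.factorial_succ m
  have hd0 : (Nat.factorial d : ℂ) ≠ 0 := Nat.cast_ne_zero.mpr (Nat.factorial_ne_zero d)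
  have hm0 : (Nat.factorial m : ℂ) ≠ 0 := Nat.cast_ne_zero.mpr (Nat.factorial_ne_zero m)
  have hm1 : (m : ℂ) + 1 ≠ 0 := by
    have : ((m+1 : ℕ) : ℂ) ≠ 0 := Nat.cast_ne_zero.mpr (Nat.succ_ne_zero m)
    push_cast at this; exact this
  have hd1 : (d : ℂ) + 1 ≠ 0 := by
    have : ((d+1 : ℕ) : ℂ) ≠ 0 := Nat.cast_ne_zero.mpr (Nat.succ_ne_zero d)
    push_cast at this; exact this
  have hd2 : (d : ℂ) + 2 ≠ 0 := by
    have : ((d+2 : ℕ) : ℂ) ≠ 0 := Nat.cast_ne_zero.mpr (by omega)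
    push_cast at this; exact this
  rw [h1, h2]
  push_cast
  field_simp
  ring


lemma G_rec (k m : ℕ) :
    ((m : ℂ) + 1) ^ 2 * (G k).coeff (m + 1)
      = -(((k : ℂ) + 1) - 2 * m) * (((k : ℂ) + 1) - 2 * m - 1) * (G k).coeff m := by
  rcases lt_trichotomy (m + 1) ((k + 1) / 2 + 1) with h | h | h
  · -- main case : 2 * (m + 1) ≤ k + 1
    have h2 : 2 * (m + 1) ≤ k + 1 := by omega
    obtain ⟨d, hd⟩ : ∃ d, k + 1 = d + 2 * m + 2 := ⟨k + 1 - 2 * (m + 1), by omega⟩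
    rw [G_coeff, G_coeff, if_pos h, if_pos (by omega)]
    have e1 : cc k (m + 1)
        = (-1) ^ (m + 1) * ((Nat.factorial (d + 2 * m + 2) : ℂ)) /
            ((Nat.factorial d : ℂ) * ((Nat.factorial (m + 1) : ℂ)) ^ 2) := by
      rw [cc, hd, show d + 2 * m + 2 - 2 * (m + 1) = d by omega]
    have e2 : cc k m
        = (-1) ^ m * ((Nat.factorial (d + 2 * m + 2) : ℂ)) /
            ((Nat.factorial (d + 2) : ℂ) * ((Nat.factorial m : ℂ)) ^ 2) := by
      rw [cc, hd, show d + 2 * m + 2 - 2 * m = d + 2 by omega]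
    have e3 : ((k : ℂ) + 1) - 2 * m = (d : ℂ) + 2 := by
      have : (k : ℂ) + 1 = (d : ℂ) + 2 * m + 2 := by exact_mod_cast congrArg (Nat.cast : ℕ → ℂ) hd
      rw [this]; ring
    have e4 : ((k : ℂ) + 1) - 2 * m - 1 = (d : ℂ) + 1 := by rw [e3]; ring
    rw [e1, e2, e3]
    have := fact_core d m
    linear_combination this
  · -- boundary case m + 1 = J
    have hm : m = (k + 1) / 2 := by omega
    rw [G_coeff, G_coeff, if_neg (by omega), if_pos (by omega)]
    have : ((k : ℂ) + 1) - 2 * m = ((k + 1) % 2 : ℕ) := by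
      have := Nat.div_add_mod (k + 1) 2
      have hc : (k : ℂ) + 1 = 2 * ((((k+1)/2 : ℕ)) : ℂ) + (((k+1) % 2 : ℕ) : ℂ) := by
        exact_mod_cast congrArg (Nat.cast : ℕ → ℂ) this.symm
      rw [hc, hm]; ring
    rw [this]
    have h2 : (k + 1) % 2 < 2 := Nat.mod_lt _ (by norm_num)
    interval_cases h : (k + 1) % 2 <;> simp_all <;> ring
  · -- both out of range
    rw [G_coeff, G_coeff, if_neg (by omega), if_neg (by omega)]
    ring


lemma coeff_X_mul_zero' (p : Polynomial ℂ) : (X * p).coeff 0 = 0 := by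
  simp [Polynomial.mul_coeff_zero]

lemma G_ODE (k : ℕ) :
    X * (1 + 4 * X) * derivative (derivative (G k))
      + (1 + C (6 - 4 * ((k : ℂ) + 1)) * X) * derivative (G k)
      + C (((k : ℂ) + 1) * (k : ℂ)) * G k = 0 := by
  set A := derivative (derivative (G k)) with hA
  set B := derivative (G k) with hB
  have expand : X * (1 + 4 * X) * A + (1 + C (6 - 4 * ((k : ℂ) + 1)) * X) * B
      + C (((k : ℂ) + 1) * (k : ℂ)) * G k
      = X * A + 4 * (X * (X * A)) + B + C (6 - 4 * ((k : ℂ) + 1)) * (X * B)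
        + C (((k : ℂ) + 1) * (k : ℂ)) * G k := by ring
  rw [expand]
  ext m
  match m with
  | 0 =>
    simp only [coeff_add, coeff_X_mul_zero', coeff_C_mul, coeff_ofNat_mul, mul_zero, add_zero,
      zero_add, hB, coeff_derivative, coeff_zero]
    have h := G_rec k 0; push_cast at h ⊢
    linear_combination h
  | 1 =>
    simp only [coeff_add, coeff_X_mul, coeff_X_mul_zero', coeff_C_mul, coeff_ofNat_mul,
      mul_zero, add_zero, zero_add, hA, hB, coeff_derivative, coeff_zero]
    have h := G_rec k 1; push_cast at h ⊢
    linear_combination h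
  | (s+2) =>
    simp only [coeff_add, coeff_X_mul, coeff_C_mul, coeff_ofNat_mul,
      hA, hB, coeff_derivative, coeff_zero]
    have h := G_rec k (s + 2); push_cast at h ⊢
    linear_combination h


lemma G_iter (k : ℕ) (m : ℕ) :
    (X + C 4 * X ^ 2) * derivative^[m + 2] (G k)
      + (C (1 + (m : ℂ)) + C ((6 - 4 * ((k : ℂ) + 1)) + 8 * m) * X) * derivative^[m + 1] (G k)
      + C (((k : ℂ) + 1) * k + m * (6 - 4 * ((k : ℂ) + 1)) + 4 * m * (m - 1))
          * derivative^[m] (G k) = 0 := by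
  induction m with
  | zero =>
    have h := G_ODE k
    simp only [Function.iterate_succ, Function.iterate_zero, Function.comp_apply, id_eq]
    push_cast
    simp only [C_add, C_mul, C_sub, C_1, map_ofNat, map_zero] at h ⊢
    linear_combination h
  | succ m ih =>
    have h' := congrArg derivative ih
    simp only [derivative_add, derivative_mul, derivative_C, derivative_X, derivative_one,
      zero_mul, add_zero, mul_one, one_mul, zero_add, derivative_zero, derivative_X_pow,
      Nat.cast_ofNat, pow_one, map_zero] at h'
    rw [← Function.iterate_succ_apply' derivative (m+2),
        ← Function.iterate_succ_apply' derivative (m+1),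
        ← Function.iterate_succ_apply' derivative m] at h'
    push_cast
    push_cast at h'
    simp only [C_add, C_mul, C_sub, C_1, map_ofNat, map_zero] at h' ⊢
    linear_combination h'


lemma cc_zero (k : ℕ) : cc k 0 = 1 := by
  have h : ((Nat.factorial (k + 1) : ℂ)) ≠ 0 := Nat.cast_ne_zero.mpr (Nat.factorial_ne_zero _)
  simp [cc]
  exact_mod_cast h

lemma G_ne_zero (k : ℕ) : G k ≠ 0 := by
  intro h
  have := G_coeff k 0
  rw [h, cc_zero] at this
  simp at this

lemma G_not_double_root (k : ℕ) (α : ℂ) (h0 : α ≠ 0) (h4 : 1 + 4 * α ≠ 0)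
    (hG : (G k).eval α = 0) (hG' : (derivative (G k)).eval α = 0) : False := by
  have key : ∀ m, (derivative^[m] (G k)).eval α = 0 ∧ (derivative^[m + 1] (G k)).eval α = 0 := by
    intro m
    induction m with
    | zero => exact ⟨by simpa using hG, by simpa using hG'⟩
    | succ m ih =>
      refine ⟨ih.2, ?_⟩
      have h := congrArg (Polynomial.eval α) (G_iter k m)
      simp only [eval_add, eval_mul, eval_C, eval_X, eval_pow, eval_zero, ih.1, ih.2,
        mul_zero, add_zero, zero_add] at h
      rcases mul_eq_zero.mp h with h' | h'
      · exfalso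
        have : α * (1 + 4 * α) = 0 := by linear_combination h'
        rcases mul_eq_zero.mp this with h'' | h'' <;> tauto
      · rw [show m + 1 + 1 = m + 2 from rfl]; exact h'
  have hT : Polynomial.taylor α (G k) = 0 := by
    ext m
    rw [Polynomial.taylor_coeff]
    have hf := congrFun (Polynomial.factorial_smul_hasseDeriv (R := ℂ) m) (G k)
    have := congrArg (Polynomial.eval α) hf
    have h2 : ((m.factorial : ℂ)) * (Polynomial.hasseDeriv m (G k)).eval α
        = (derivative^[m] (G k)).eval α := by
      simpa [Polynomial.eval_smul, smul_eq_mul] using this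
    have h3 := (key m).1
    rw [h3] at h2
    have hfac : ((m.factorial : ℂ)) ≠ 0 := Nat.cast_ne_zero.mpr (Nat.factorial_ne_zero _)
    simpa [coeff_zero] using (mul_eq_zero.mp h2).resolve_left hfac
  exact G_ne_zero k (Polynomial.taylor_injective α (by simpa using hT))


lemma G_eval_zero (k : ℕ) : (G k).eval 0 = 1 := by
  rw [← Polynomial.coeff_zero_eq_eval_zero, G_coeff, if_pos (by omega), cc_zero]

lemma cc_ne_zero (k j : ℕ) : cc k j ≠ 0 := by
  apply div_ne_zero
  · apply mul_ne_zero
    · exact pow_ne_zero _ (by norm_num)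
    · exact Nat.cast_ne_zero.mpr (Nat.factorial_ne_zero _)
  · apply mul_ne_zero
    · exact Nat.cast_ne_zero.mpr (Nat.factorial_ne_zero _)
    · exact pow_ne_zero _ (Nat.cast_ne_zero.mpr (Nat.factorial_ne_zero _))

lemma G_eval_quarter (k : ℕ) : (G k).eval (-(1/4)) ≠ 0 := by
  have key : (G k).eval (-(1/4))
      = ((∑ j ∈ Finset.range ((k + 1) / 2 + 1),
          ((Nat.factorial (k+1) : ℝ) /
            ((Nat.factorial (k + 1 - 2*j) : ℝ) * (Nat.factorial j : ℝ)^2 * 4 ^ j)) : ℝ) : ℂ) := by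
    rw [G, Polynomial.eval_finset_sum]
    push_cast
    refine Finset.sum_congr rfl fun j _ => ?_
    simp only [Polynomial.eval_mul, Polynomial.eval_C, Polynomial.eval_pow, Polynomial.eval_X, cc]
    have h1 : ((-1 : ℂ))^j * (-(1/4) : ℂ)^j = ((4 : ℂ)^j)⁻¹ := by
      rw [← mul_pow, ← inv_pow]
      norm_num
    set N := ((Nat.factorial (k+1) : ℂ)) with hN
    set D := ((Nat.factorial (k + 1 - 2*j) : ℂ) * (Nat.factorial j : ℂ)^2) with hD
    have hD0 : D ≠ 0 := mul_ne_zero (Nat.cast_ne_zero.mpr (Nat.factorial_ne_zero _))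
      (pow_ne_zero _ (Nat.cast_ne_zero.mpr (Nat.factorial_ne_zero _)))
    have h40 : ((4:ℂ))^j ≠ 0 := pow_ne_zero _ (by norm_num)
    have expand : (-1 : ℂ)^j * N / D * (-(1/4))^j = ((-1 : ℂ)^j * (-(1/4))^j) * (N / D) := by
      ring
    rw [expand, h1]
    field_simp
  rw [key]
  rw [Complex.ofReal_ne_zero]
  have hpos : 0 < ∑ j ∈ Finset.range ((k + 1) / 2 + 1),
      ((Nat.factorial (k+1) : ℝ) /
        ((Nat.factorial (k + 1 - 2*j) : ℝ) * (Nat.factorial j : ℝ)^2 * 4 ^ j)) := by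
    apply Finset.sum_pos
    · intro j _
      apply div_pos
      · exact_mod_cast Nat.factorial_pos _
      · apply mul_pos
        · apply mul_pos
          · exact_mod_cast Nat.factorial_pos _
          · positivity
        · positivity
    · exact ⟨0, Finset.mem_range.mpr (by omega)⟩
  exact ne_of_gt hpos


def H0 (k : ℕ) : Polynomial ℂ := C ((k : ℂ) + 1) * G k - 2 * X * derivative (G k)

def G1 (k : ℕ) : Polynomial ℂ :=
  (C ((k : ℂ) + 2) - C (2 * (k : ℂ)) * X) * H0 k + C (3 * (k : ℂ) + 4) * X * derivative (G k)

lemma no_common_root (k : ℕ) (hk : 5 ≤ k) (α : ℂ)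
    (hG : (G k).eval α = 0) (hG1 : (G1 k).eval α = 0) : False := by
  have hkC : (k : ℂ) ≠ 0 := Nat.cast_ne_zero.mpr (by omega)
  have key : (k : ℂ) * α * (1 + 4 * α) * (derivative (G k)).eval α = 0 := by
    have h := hG1
    simp only [G1, H0, eval_add, eval_sub, eval_mul, eval_C, eval_X, eval_ofNat] at h
    rw [hG] at h
    linear_combination h
  rcases mul_eq_zero.mp key with h | hd
  · rcases mul_eq_zero.mp h with h | h4
    · rcases mul_eq_zero.mp h with h | h0
      · exact hkC h
      · rw [h0, G_eval_zero] at hG; exact one_ne_zero hG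
    · have hα : α = -(1/4) := by linear_combination h4 / 4
      rw [hα] at hG; exact G_eval_quarter k hG
  · exact G_not_double_root k α
      (by rintro rfl; rw [G_eval_zero] at hG; exact one_ne_zero hG)
      (by intro h4; have : α = -(1/4) := by linear_combination h4 / 4
          rw [this] at hG; exact G_eval_quarter k hG)
      hG hd


lemma G_eval_sum (k : ℕ) (α : ℂ) :
    (G k).eval α = ∑ j ∈ Finset.range ((k + 1) / 2 + 1), cc k j * α ^ j := by
  simp [G, eval_finset_sum]

lemma derivG_eval (k : ℕ) (α : ℂ) :
    (derivative (G k)).eval α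
      = ∑ j ∈ Finset.range ((k + 1) / 2 + 1), cc k j * j * α ^ (j - 1) := by
  rw [G, map_sum]
  rw [eval_finset_sum]
  refine Finset.sum_congr rfl fun j _ => ?_
  rw [derivative_C_mul_X_pow]
  simp [mul_assoc]

lemma H0_eval (k : ℕ) (α : ℂ) :
    (H0 k).eval α
      = ∑ j ∈ Finset.range ((k + 1) / 2 + 1), cc k j * (((k : ℂ) + 1) - 2 * j) * α ^ j := by
  simp only [H0, eval_sub, eval_mul, eval_C, eval_X, eval_ofNat]
  rw [G_eval_sum, derivG_eval, Finset.mul_sum, Finset.mul_sum, ← Finset.sum_sub_distrib]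
  refine Finset.sum_congr rfl fun j _ => ?_
  match j with
  | 0 => simp; ring
  | (s+1) =>
    have : α ^ (s + 1 - 1) = α ^ s := by norm_num
    rw [this]
    push_cast
    rw [pow_succ]
    ring


end Stmt12

end

open MvPolynomial

namespace Stmt12

lemma f0_eval (k : ℕ) (y z : ℂ) :
    eval ![y, z] (f0 k)
      = ∑ j ∈ Finset.range ((k + 1) / 2 + 1), cc k j * y ^ (k + 1 - 2 * j) * z ^ j := by
  simp [f0, cc]

lemma pd0_eval (k : ℕ) (y z : ℂ) :
    eval ![y, z] (pderiv 0 (f0 k))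
      = ∑ j ∈ Finset.range ((k + 1) / 2 + 1),
          cc k j * ((k + 1 - 2 * j : ℕ) : ℂ) * y ^ (k + 1 - 2 * j - 1) * z ^ j := by
  rw [f0, map_sum, map_sum]
  refine Finset.sum_congr rfl fun j _ => ?_
  rw [pderiv_mul, pderiv_mul]
  simp [pderiv_pow, cc]
  try ring
  try tauto

lemma pd1_eval (k : ℕ) (y z : ℂ) :
    eval ![y, z] (pderiv 1 (f0 k))
      = ∑ j ∈ Finset.range ((k + 1) / 2 + 1),
          cc k j * (j : ℂ) * y ^ (k + 1 - 2 * j) * z ^ (j - 1) := by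
  rw [f0, map_sum, map_sum]
  refine Finset.sum_congr rfl fun j _ => ?_
  rw [pderiv_mul, pderiv_mul]
  simp [pderiv_pow, cc]
  try ring
  try tauto


lemma f0_eval_subst (k : ℕ) (y α : ℂ) :
    eval ![y, α * y ^ 2] (f0 k) = y ^ (k + 1) * (G k).eval α := by
  rw [f0_eval, G_eval_sum, Finset.mul_sum]
  refine Finset.sum_congr rfl fun j hj => ?_
  have h2 : 2 * j ≤ k + 1 := by
    have := Finset.mem_range.mp hj; omega
  have hy : y ^ (k + 1 - 2 * j) * (y ^ 2) ^ j = y ^ (k + 1) := by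
    rw [← pow_mul, ← pow_add]
    congr 1
    omega
  calc cc k j * y ^ (k + 1 - 2 * j) * (α * y ^ 2) ^ j
      = cc k j * α ^ j * (y ^ (k + 1 - 2 * j) * (y ^ 2) ^ j) := by rw [mul_pow]; ring
    _ = y ^ (k + 1) * (cc k j * α ^ j) := by rw [hy]; ring

lemma pd0_eval_subst (k : ℕ) (y α : ℂ) :
    eval ![y, α * y ^ 2] (pderiv 0 (f0 k)) = y ^ k * (H0 k).eval α := by
  rw [pd0_eval, H0_eval, Finset.mul_sum]
  refine Finset.sum_congr rfl fun j hj => ?_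
  have h2 : 2 * j ≤ k + 1 := by
    have := Finset.mem_range.mp hj; omega
  rcases Nat.lt_or_ge (2 * j) (k + 1) with hlt | hge
  · have hcast : ((k + 1 - 2 * j : ℕ) : ℂ) = ((k : ℂ) + 1) - 2 * j := by
      push_cast [Nat.cast_sub (by omega : 2 * j ≤ k + 1)]
      ring
    have hy : y ^ (k + 1 - 2 * j - 1) * (y ^ 2) ^ j = y ^ k := by
      rw [← pow_mul, ← pow_add]
      congr 1
      omega
    calc cc k j * ((k + 1 - 2 * j : ℕ) : ℂ) * y ^ (k + 1 - 2 * j - 1) * (α * y ^ 2) ^ j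
        = cc k j * ((k + 1 - 2 * j : ℕ) : ℂ) * α ^ j * (y ^ (k + 1 - 2 * j - 1) * (y ^ 2) ^ j) := by
          rw [mul_pow]; ring
      _ = y ^ k * (cc k j * (((k : ℂ) + 1) - 2 * j) * α ^ j) := by rw [hy, hcast]; ring
  · have hj2 : 2 * j = k + 1 := by omega
    have h1 : ((k + 1 - 2 * j : ℕ) : ℂ) = 0 := by
      rw [show k + 1 - 2 * j = 0 by omega]; norm_num
    have h2' : ((k : ℂ) + 1) - 2 * j = 0 := by
      have : ((2 * j : ℕ) : ℂ) = ((k + 1 : ℕ) : ℂ) := by rw [hj2]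
      push_cast at this
      linear_combination -this
    rw [h1, h2']
    ring

lemma pd1_eval_subst (k : ℕ) (hk : 1 ≤ k) (y α : ℂ) :
    eval ![y, α * y ^ 2] (pderiv 1 (f0 k)) = y ^ (k - 1) * (Polynomial.derivative (G k)).eval α := by
  rw [pd1_eval, derivG_eval, Finset.mul_sum]
  refine Finset.sum_congr rfl fun j hj => ?_
  have h2 : 2 * j ≤ k + 1 := by
    have := Finset.mem_range.mp hj; omega
  match j with
  | 0 => simp
  | (s+1) =>
    have hy : y ^ (k + 1 - 2 * (s + 1)) * (y ^ 2) ^ s = y ^ (k - 1) := by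
      rw [← pow_mul, ← pow_add]
      congr 1
      omega
    have hz : (α * y ^ 2) ^ (s + 1 - 1) = α ^ s * (y ^ 2) ^ s := by
      rw [show s + 1 - 1 = s from rfl, mul_pow]
    rw [hz, show s + 1 - 1 = s from rfl]
    calc cc k (s+1) * ((s+1 : ℕ) : ℂ) * y ^ (k + 1 - 2 * (s+1)) * (α ^ s * (y ^ 2) ^ s)
        = cc k (s+1) * ((s+1 : ℕ) : ℂ) * α ^ s * (y ^ (k + 1 - 2 * (s+1)) * (y ^ 2) ^ s) := by ring
      _ = y ^ (k - 1) * (cc k (s+1) * ((s+1 : ℕ) : ℂ) * α ^ s) := by rw [hy]; ring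

lemma f1_eval_subst (k : ℕ) (hk : 1 ≤ k) (y α : ℂ) :
    eval ![y, α * y ^ 2] (D2 (k : ℂ) (f0 k)) = y ^ (k + 2) * (G1 k).eval α := by
  show eval ![y, α * y ^ 2]
      ((C ((k : ℂ) + 2) * X 0 ^ 2 - C (2 * (k : ℂ)) * X 1) * pderiv 0 (f0 k)
        + C (3 * (k : ℂ) + 4) * X 0 * X 1 * pderiv 1 (f0 k)) = _
  simp only [map_add, map_mul, map_sub]
  rw [pd0_eval_subst, pd1_eval_subst k hk]
  simp only [eval_C, eval_X, map_pow, eval_X, Matrix.cons_val_zero, Matrix.cons_val_one,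
    Matrix.head_cons]
  rw [G1]
  simp only [Polynomial.eval_add, Polynomial.eval_mul, Polynomial.eval_sub, Polynomial.eval_C,
    Polynomial.eval_X]
  have hy : y ^ (k - 1) * y = y ^ k := by
    rw [← pow_succ]
    congr 1
    omega
  calc (((k : ℂ) + 2) * y ^ 2 - 2 * (k : ℂ) * (α * y ^ 2)) * (y ^ k * (H0 k).eval α)
        + (3 * (k : ℂ) + 4) * y * (α * y ^ 2) * (y ^ (k - 1) * (Polynomial.derivative (G k)).eval α)
      = (((k : ℂ) + 2) - 2 * (k : ℂ) * α) * (H0 k).eval α * (y ^ 2 * y ^ k)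
        + (3 * (k : ℂ) + 4) * α * (Polynomial.derivative (G k)).eval α * (y ^ 2 * (y ^ (k - 1) * y)) := by
        ring
    _ = y ^ (k + 2) * ((((k : ℂ) + 2) - 2 * (k : ℂ) * α) * (H0 k).eval α
        + (3 * (k : ℂ) + 4) * α * (Polynomial.derivative (G k)).eval α) := by
        rw [hy]; ring
    _ = _ := by ring


lemma f0_eval_at0 (k : ℕ) (hk : Odd k) (z : ℂ) :
    eval ![(0 : ℂ), z] (f0 k) = cc k ((k + 1) / 2) * z ^ ((k + 1) / 2) := by
  obtain ⟨m, rfl⟩ := hk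
  rw [f0_eval]
  rw [Finset.sum_eq_single ((2 * m + 1 + 1) / 2)]
  · rw [show 2 * m + 1 + 1 - 2 * ((2 * m + 1 + 1) / 2) = 0 by omega]
    norm_num
  · intro j hj hne
    have hj' := Finset.mem_range.mp hj
    rw [zero_pow (by omega : 2 * m + 1 + 1 - 2 * j ≠ 0)]
    ring
  · intro h
    exact absurd (Finset.mem_range.mpr (by omega)) h

lemma f1_eval_at0 (k : ℕ) (hk : Even k) (z : ℂ) :
    eval ![(0 : ℂ), z] (D2 (k : ℂ) (f0 k)) = -(2 * (k : ℂ)) * cc k (k / 2) * z ^ (k / 2 + 1) := by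
  show eval ![(0:ℂ), z]
      ((C ((k : ℂ) + 2) * X 0 ^ 2 - C (2 * (k : ℂ)) * X 1) * pderiv 0 (f0 k)
        + C (3 * (k : ℂ) + 4) * X 0 * X 1 * pderiv 1 (f0 k)) = _
  simp only [map_add, map_mul, map_sub, map_pow, eval_C, eval_X, Matrix.cons_val_zero,
    Matrix.cons_val_one, Matrix.head_cons]
  rw [pd0_eval]
  have hsum : (∑ j ∈ Finset.range ((k + 1) / 2 + 1),
      cc k j * ((k + 1 - 2 * j : ℕ) : ℂ) * (0 : ℂ) ^ (k + 1 - 2 * j - 1) * z ^ j)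
      = cc k (k / 2) * z ^ (k / 2) := by
    rw [Finset.sum_eq_single (k / 2)]
    · rw [show k + 1 - 2 * (k / 2) - 1 = 0 by rcases hk with ⟨m, rfl⟩; omega,
        show ((k + 1 - 2 * (k / 2) : ℕ) : ℂ) = 1 by
          rw [show k + 1 - 2 * (k / 2) = 1 by rcases hk with ⟨m, rfl⟩; omega]; norm_num]
      norm_num
    · intro j hj hne
      have hj' := Finset.mem_range.mp hj
      rw [zero_pow (by rcases hk with ⟨m, rfl⟩; omega : k + 1 - 2 * j - 1 ≠ 0)]
      ring
    · intro h
      exact absurd (Finset.mem_range.mpr (by omega)) h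
  rw [hsum]
  rw [zero_pow (by norm_num : (2 : ℕ) ≠ 0)]
  rw [pow_succ]
  ring


lemma common_zero (k : ℕ) (hk : 5 ≤ k) (x : Fin 2 → ℂ)
    (h0 : eval x (f0 k) = 0) (h1 : eval x (D2 (k : ℂ) (f0 k)) = 0) : x = 0 := by
  have hx : x = ![x 0, x 1] := by
    funext i; fin_cases i <;> rfl
  by_cases hy : x 0 = 0
  · by_cases hz : x 1 = 0
    · funext i; fin_cases i <;> simp [hy, hz]
    · exfalso
      rcases Nat.even_or_odd k with he | ho
      · rw [hx, hy] at h1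
        rw [f1_eval_at0 k he] at h1
        rcases mul_eq_zero.mp h1 with h | h
        · rcases mul_eq_zero.mp h with h | h
          · have hk0 : (k : ℂ) ≠ 0 := Nat.cast_ne_zero.mpr (by omega)
            have : (2 : ℂ) * k ≠ 0 := mul_ne_zero (by norm_num) hk0
            rw [neg_eq_zero] at h
            exact this h
          · exact cc_ne_zero k _ h
        · exact hz (pow_eq_zero_iff (by omega) |>.mp h)
      · rw [hx, hy] at h0
        rw [f0_eval_at0 k ho] at h0
        rcases mul_eq_zero.mp h0 with h | h
        · exact cc_ne_zero k _ h
        · exact hz (pow_eq_zero_iff (by omega) |>.mp h)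
  · exfalso
    set α := x 1 / (x 0) ^ 2 with hα
    have hz : x 1 = α * (x 0) ^ 2 := by
      rw [hα, div_mul_cancel₀ _ (pow_ne_zero _ hy)]
    rw [hx, hz, f0_eval_subst] at h0
    rw [hx, hz, f1_eval_subst k (by omega)] at h1
    have hG : (G k).eval α = 0 :=
      (mul_eq_zero.mp h0).resolve_left (pow_ne_zero _ hy)
    have hG1 : (G1 k).eval α = 0 :=
      (mul_eq_zero.mp h1).resolve_left (pow_ne_zero _ hy)
    exact no_common_root k hk α hG hG1

lemma prime_X0 : Prime (X 0 : MvPolynomial (Fin 2) ℂ) := by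
  rw [← MulEquiv.prime_iff (finSuccEquiv ℂ 1).toMulEquiv]
  have : (finSuccEquiv ℂ 1).toMulEquiv (X 0) = Polynomial.X := by
    simp [finSuccEquiv_X_zero]
  rw [this]
  exact Polynomial.prime_X

lemma prime_X1 : Prime (X 1 : MvPolynomial (Fin 2) ℂ) := by
  rw [← MulEquiv.prime_iff (renameEquiv ℂ (Equiv.swap (0 : Fin 2) 1)).toMulEquiv]
  have : (renameEquiv ℂ (Equiv.swap (0 : Fin 2) 1)).toMulEquiv (X 1)
      = (X 0 : MvPolynomial (Fin 2) ℂ) := by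
    simp [renameEquiv_apply, rename_X]
  rw [this]
  exact prime_X0

lemma X0_not_dvd_X1 : ¬ (X 0 : MvPolynomial (Fin 2) ℂ) ∣ X 1 := by
  rintro ⟨c, hc⟩
  have := congrArg (eval ![(0 : ℂ), 1]) hc
  simp at this

lemma isRelPrime_f0_f1 (k : ℕ) (hk : 5 ≤ k) :
    IsRelPrime (f0 k) (D2 (k : ℂ) (f0 k)) := by
  intro d hd0 hd1
  set I := Ideal.span ({f0 k, D2 (k : ℂ) (f0 k)} : Set (MvPolynomial (Fin 2) ℂ)) with hI
  have hmem0 : f0 k ∈ I := Ideal.subset_span (by simp)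
  have hmem1 : D2 (k : ℂ) (f0 k) ∈ I := Ideal.subset_span (by simp)
  have hrad : ∀ i : Fin 2, (X i : MvPolynomial (Fin 2) ℂ) ∈ I.radical := by
    intro i
    rw [← vanishingIdeal_zeroLocus_eq_radical (K := ℂ)]
    rw [mem_vanishingIdeal_iff]
    intro x hx
    rw [mem_zeroLocus_iff] at hx
    have hx0 := common_zero k hk x (hx _ hmem0) (hx _ hmem1)
    rw [hx0]
    simp
  obtain ⟨N, hN⟩ := hrad 0
  obtain ⟨M, hM⟩ := hrad 1
  rw [hI, Ideal.mem_span_pair] at hN hM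
  obtain ⟨u, v, huv⟩ := hN
  obtain ⟨u', v', huv'⟩ := hM
  have hdX0 : d ∣ (X 0 : MvPolynomial (Fin 2) ℂ) ^ N := by
    rw [← huv]
    exact dvd_add (Dvd.dvd.mul_left hd0 u) (Dvd.dvd.mul_left hd1 v)
  have hdX1 : d ∣ (X 1 : MvPolynomial (Fin 2) ℂ) ^ M := by
    rw [← huv']
    exact dvd_add (Dvd.dvd.mul_left hd0 u') (Dvd.dvd.mul_left hd1 v')
  obtain ⟨i, hi, hassoc⟩ := (dvd_prime_pow prime_X0 N).mp hdX0
  match i with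
  | 0 =>
    rw [pow_zero] at hassoc
    exact hassoc.symm.isUnit isUnit_one
  | (i+1) =>
    exfalso
    have hX0d : (X 0 : MvPolynomial (Fin 2) ℂ) ∣ d :=
      dvd_trans (dvd_pow_self _ (Nat.succ_ne_zero i)) hassoc.symm.dvd
    have : (X 0 : MvPolynomial (Fin 2) ℂ) ∣ X 1 :=
      prime_X0.dvd_of_dvd_pow (dvd_trans hX0d hdX1)
    exact X0_not_dvd_X1 this


lemma f1_ne_zero (k : ℕ) (hk : 5 ≤ k) : D2 (k : ℂ) (f0 k) ≠ 0 := by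
  intro hzero
  have hv : (![(1 : ℂ), (0 : ℂ) * 1 ^ 2]) = ![(1 : ℂ), 0] := by norm_num
  have hs := f1_eval_subst k (by omega) 1 0
  rw [hv, hzero, map_zero] at hs
  have hG10 : (G1 k).eval 0 = ((k : ℂ) + 2) * (((k : ℂ) + 1) * 1) := by
    simp [G1, H0, G_eval_zero]
  rw [one_pow, one_mul, hG10] at hs
  have h1 : ((k : ℂ) + 1) ≠ 0 := by
    have : ((k + 1 : ℕ) : ℂ) ≠ 0 := Nat.cast_ne_zero.mpr (by omega)
    push_cast at this; exact this
  have h2 : ((k : ℂ) + 2) ≠ 0 := by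
    have : ((k + 2 : ℕ) : ℂ) ≠ 0 := Nat.cast_ne_zero.mpr (by omega)
    push_cast at this; exact this
  exact (mul_ne_zero h2 (mul_ne_zero h1 one_ne_zero)) hs.symm

end Stmt12

theorem stmt_12 (k : ℕ) (hk : 5 ≤ k) (a b : MvPolynomial (Fin 2) ℂ)
    (hab : a * f0 k + b * D2 (k : ℂ) (f0 k) = 0) :
    ∃ h : MvPolynomial (Fin 2) ℂ,
      a = h * D2 (k : ℂ) (f0 k) ∧ b = -h * f0 k := by
  have hrel := Stmt12.isRelPrime_f0_f1 k hk
  have hF1a : D2 (k : ℂ) (f0 k) ∣ a * f0 k := ⟨-b, by linear_combination hab⟩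
  have hdvd : D2 (k : ℂ) (f0 k) ∣ a := hrel.symm.dvd_of_dvd_mul_right hF1a
  obtain ⟨h, hh⟩ := hdvd
  refine ⟨h, by rw [hh]; ring, ?_⟩
  have h2 : D2 (k : ℂ) (f0 k) * (h * f0 k + b) = 0 := by
    linear_combination hab - f0 k * hh
  have h3 := (mul_eq_zero.mp h2).resolve_left (Stmt12.f1_ne_zero k hk)
  linear_combination h3
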